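/- arXiv:1309.1694 — 2 statements merged into one kernel-verified Lean document; each statement's English description precedes it below -/
import Mathlib

section
/- Reduction of the Stokes system to a weakly coupled elliptic system: Let Ω ⊂ ℝ² be a domain, μ ∈ C²(Ω) with μ > 0, and let w = (w₁,w₂) ∈ C²(Ω;ℝ²) and f ∈ C³(Ω;ℝ) satisfy in Ω: (i) Δf = div w; (ii) μ Δw₁ + 2 ∂_{x₁}μ ∂_{x₁}w₁ + ∂_{x₂}μ (∂_{x₂}w₁ + ∂_{x₁}w₂) + ∂_{x₁}μ · div w + 2 ∂²_{x₁x₁}μ ∂_{x₁}f + 2 ∂²_{x₂x₁}μ ∂_{x₂}f = 0; (iii) μ Δw₂ + 2 ∂_{x₂}μ ∂_{x₂}w₂ + ∂_{x₁}μ (∂_{x₂}w₁ + ∂_{x₁}w₂) + ∂_{x₂}μ · div w + 2 ∂²_{x₂x₂}μ ∂_{x₂}f + 2 ∂²_{x₁x₂}μ ∂_{x₁}f = 0. Define u = w − ∇f and p = ½ μ Δf + ∂_{x₁}μ ∂_{x₁}f + ∂_{x₂}μ ∂_{x₂}f. Then div u = 0 in Ω and for k = 1,2: ½ Σ_{j=1}²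 ∂_{x_j}( μ (∂_{x_j}u_k + ∂_{x_k}u_j) ) + ∂_{x_k}p = 0 in Ω, i.e. (u,p) is a solution of the stationary Stokes equations with viscosity μ. -/
open Set

noncomputable section

/-- Partial derivative `∂/∂x₁`. -/
def pd1 (f : ℝ × ℝ → ℝ) : ℝ × ℝ → ℝ := fun x => fderiv ℝ f x (1, 0)

/-- Partial derivative `∂/∂x₂`. -/
def pd2 (f : ℝ × ℝ → ℝ) : ℝ × ℝ → ℝ := fun x => fderiv ℝ f x (0, 1)

/-- The velocity component `u₁ = w₁ − ∂₁ f`. -/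
def su1 (w1 f : ℝ × ℝ → ℝ) : ℝ × ℝ → ℝ := fun x => w1 x - pd1 f x

/-- The velocity component `u₂ = w₂ − ∂₂ f`. -/
def su2 (w2 f : ℝ × ℝ → ℝ) : ℝ × ℝ → ℝ := fun x => w2 x - pd2 f x

/-- The pressure `p = ½ μ Δf + ∂₁μ ∂₁f + ∂₂μ ∂₂f`. -/
def sp (μ f : ℝ × ℝ → ℝ) : ℝ × ℝ → ℝ :=
  fun x => μ x * (pd1 (pd1 f) x + pd2 (pd2 f) x) / 2
    + pd1 μ x * pd1 f x + pd2 μ x * pd2 f x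

section helpers
variable {g h : ℝ × ℝ → ℝ} {x : ℝ × ℝ}

lemma pd1_congr (he : g =ᶠ[nhds x] h) : pd1 g x = pd1 h x := by
  unfold pd1; rw [he.fderiv_eq]
lemma pd2_congr (he : g =ᶠ[nhds x] h) : pd2 g x = pd2 h x := by
  unfold pd2; rw [he.fderiv_eq]

lemma pd1_add (hg : DifferentiableAt ℝ g x) (hh : DifferentiableAt ℝ h x) :
    pd1 (fun y => g y + h y) x = pd1 g x + pd1 h x := by
  unfold pd1; rw [fderiv_fun_add hg hh]; simp
lemma pd2_add (hg : DifferentiableAt ℝ g x) (hh : DifferentiableAt ℝ h x) :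
    pd2 (fun y => g y + h y) x = pd2 g x + pd2 h x := by
  unfold pd2; rw [fderiv_fun_add hg hh]; simp
lemma pd1_sub (hg : DifferentiableAt ℝ g x) (hh : DifferentiableAt ℝ h x) :
    pd1 (fun y => g y - h y) x = pd1 g x - pd1 h x := by
  unfold pd1; rw [fderiv_fun_sub hg hh]; simp
lemma pd2_sub (hg : DifferentiableAt ℝ g x) (hh : DifferentiableAt ℝ h x) :
    pd2 (fun y => g y - h y) x = pd2 g x - pd2 h x := by
  unfold pd2; rw [fderiv_fun_sub hg hh]; simp
lemma pd1_mul (hg : DifferentiableAt ℝ g x) (hh : DifferentiableAt ℝ h x) :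
    pd1 (fun y => g y * h y) x = pd1 g x * h x + g x * pd1 h x := by
  unfold pd1; rw [fderiv_fun_mul hg hh]; simp; ring
lemma pd2_mul (hg : DifferentiableAt ℝ g x) (hh : DifferentiableAt ℝ h x) :
    pd2 (fun y => g y * h y) x = pd2 g x * h x + g x * pd2 h x := by
  unfold pd2; rw [fderiv_fun_mul hg hh]; simp; ring
lemma pd1_div_const (hg : DifferentiableAt ℝ g x) (c : ℝ) :
    pd1 (fun y => g y / c) x = pd1 g x / c := by
  simp only [div_eq_mul_inv]
  unfold pd1; rw [fderiv_mul_const hg]; simp [mul_comm]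
lemma pd2_div_const (hg : DifferentiableAt ℝ g x) (c : ℝ) :
    pd2 (fun y => g y / c) x = pd2 g x / c := by
  simp only [div_eq_mul_inv]
  unfold pd2; rw [fderiv_mul_const hg]; simp [mul_comm]

lemma contDiffAt_pd1_one (hg : ContDiffAt ℝ 2 g x) : ContDiffAt ℝ 1 (pd1 g) x := by
  have h1 : ContDiffAt ℝ 1 (fderiv ℝ g) x := hg.fderiv_right (m := 1) (by norm_num)
  exact h1.clm_apply contDiffAt_const
lemma contDiffAt_pd2_one (hg : ContDiffAt ℝ 2 g x) : ContDiffAt ℝ 1 (pd2 g) x := by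
  have h1 : ContDiffAt ℝ 1 (fderiv ℝ g) x := hg.fderiv_right (m := 1) (by norm_num)
  exact h1.clm_apply contDiffAt_const
lemma contDiffAt_pd1_two (hg : ContDiffAt ℝ 3 g x) : ContDiffAt ℝ 2 (pd1 g) x := by
  have h1 : ContDiffAt ℝ 2 (fderiv ℝ g) x := hg.fderiv_right (m := 2) (by norm_num)
  exact h1.clm_apply contDiffAt_const
lemma contDiffAt_pd2_two (hg : ContDiffAt ℝ 3 g x) : ContDiffAt ℝ 2 (pd2 g) x := by
  have h1 : ContDiffAt ℝ 2 (fderiv ℝ g) x := hg.fderiv_right (m := 2) (by norm_num)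
  exact h1.clm_apply contDiffAt_const

lemma diff_pd1 (hg : ContDiffAt ℝ 2 g x) : DifferentiableAt ℝ (pd1 g) x :=
  (contDiffAt_pd1_one hg).differentiableAt (by norm_num)
lemma diff_pd2 (hg : ContDiffAt ℝ 2 g x) : DifferentiableAt ℝ (pd2 g) x :=
  (contDiffAt_pd2_one hg).differentiableAt (by norm_num)

lemma pd_swap (hg : ContDiffAt ℝ 2 g x) : pd2 (pd1 g) x = pd1 (pd2 g) x := by
  have hs : IsSymmSndFDerivAt ℝ g x := hg.isSymmSndFDerivAt (by simp [minSmoothness_of_isRCLikeNormedField])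
  have hd : DifferentiableAt ℝ (fderiv ℝ g) x :=
    (hg.fderiv_right (m := 1) (by norm_num)).differentiableAt (by norm_num)
  have e1 : pd2 (pd1 g) x = fderiv ℝ (fderiv ℝ g) x (0, 1) (1, 0) := by
    unfold pd1 pd2
    rw [fderiv_clm_apply hd (differentiableAt_const _)]
    simp
  have e2 : pd1 (pd2 g) x = fderiv ℝ (fderiv ℝ g) x (1, 0) (0, 1) := by
    unfold pd1 pd2
    rw [fderiv_clm_apply hd (differentiableAt_const _)]
    simp
  rw [e1, e2, hs]
end helpers

/-- **Reduction of the Stokes system to a weakly coupled elliptic system**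
(Proposition 5.1): if `(w, f)` solves the reduced system (i)–(iii), then
`(u, p) = (w − ∇f, ½μΔf + (∇μ, ∇f))` solves the stationary Stokes equations:
`div u = 0` and `½ Σ_j ∂_j(μ(∂_j u_k + ∂_k u_j)) + ∂_k p = 0` for `k = 1, 2`. -/
theorem stokes_reduction
    (Ω : Set (ℝ × ℝ)) (hopen : IsOpen Ω) (hconn : IsConnected Ω)
    (μ w1 w2 f : ℝ × ℝ → ℝ)
    (hμ : ContDiffOn ℝ 2 μ Ω) (hμpos : ∀ x ∈ Ω, 0 < μ x)
    (hw1 : ContDiffOn ℝ 2 w1 Ω) (hw2 : ContDiffOn ℝ 2 w2 Ω)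
    (hf : ContDiffOn ℝ 3 f Ω)
    (heq1 : ∀ x ∈ Ω, pd1 (pd1 f) x + pd2 (pd2 f) x = pd1 w1 x + pd2 w2 x)
    (heq2 : ∀ x ∈ Ω,
      μ x * (pd1 (pd1 w1) x + pd2 (pd2 w1) x)
        + 2 * pd1 μ x * pd1 w1 x + pd2 μ x * (pd2 w1 x + pd1 w2 x)
        + pd1 μ x * (pd1 w1 x + pd2 w2 x)
        + 2 * pd1 (pd1 μ) x * pd1 f x + 2 * pd2 (pd1 μ) x * pd2 f x = 0)
    (heq3 : ∀ x ∈ Ω,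
      μ x * (pd1 (pd1 w2) x + pd2 (pd2 w2) x)
        + 2 * pd2 μ x * pd2 w2 x + pd1 μ x * (pd2 w1 x + pd1 w2 x)
        + pd2 μ x * (pd1 w1 x + pd2 w2 x)
        + 2 * pd2 (pd2 μ) x * pd2 f x + 2 * pd1 (pd2 μ) x * pd1 f x = 0) :
    (∀ x ∈ Ω, pd1 (su1 w1 f) x + pd2 (su2 w2 f) x = 0) ∧
    (∀ x ∈ Ω,
      (1 / 2) * (pd1 (fun y => μ y * (pd1 (su1 w1 f) y + pd1 (su1 w1 f) y)) x
          + pd2 (fun y => μ y * (pd2 (su1 w1 f) y + pd1 (su2 w2 f) y)) x)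
        + pd1 (sp μ f) x = 0) ∧
    (∀ x ∈ Ω,
      (1 / 2) * (pd1 (fun y => μ y * (pd1 (su2 w2 f) y + pd2 (su1 w1 f) y)) x
          + pd2 (fun y => μ y * (pd2 (su2 w2 f) y + pd2 (su2 w2 f) y)) x)
        + pd2 (sp μ f) x = 0) := by
  -- pointwise smoothness
  have cμ : ∀ y ∈ Ω, ContDiffAt ℝ 2 μ y := fun y hy => hμ.contDiffAt (hopen.mem_nhds hy)
  have cw1 : ∀ y ∈ Ω, ContDiffAt ℝ 2 w1 y := fun y hy => hw1.contDiffAt (hopen.mem_nhds hy)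
  have cw2 : ∀ y ∈ Ω, ContDiffAt ℝ 2 w2 y := fun y hy => hw2.contDiffAt (hopen.mem_nhds hy)
  have cf : ∀ y ∈ Ω, ContDiffAt ℝ 3 f y := fun y hy => hf.contDiffAt (hopen.mem_nhds hy)
  have cf' : ∀ y ∈ Ω, ContDiffAt ℝ 2 f y := fun y hy => (cf y hy).of_le (by norm_num)
  have cf1 : ∀ y ∈ Ω, ContDiffAt ℝ 2 (pd1 f) y := fun y hy => contDiffAt_pd1_two (cf y hy)
  have cf2 : ∀ y ∈ Ω, ContDiffAt ℝ 2 (pd2 f) y := fun y hy => contDiffAt_pd2_two (cf y hy)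
  -- differentiability
  have dμ : ∀ y ∈ Ω, DifferentiableAt ℝ μ y := fun y hy => (cμ y hy).differentiableAt (by norm_num)
  have dμ1 : ∀ y ∈ Ω, DifferentiableAt ℝ (pd1 μ) y := fun y hy => diff_pd1 (cμ y hy)
  have dμ2 : ∀ y ∈ Ω, DifferentiableAt ℝ (pd2 μ) y := fun y hy => diff_pd2 (cμ y hy)
  have dw1 : ∀ y ∈ Ω, DifferentiableAt ℝ w1 y := fun y hy => (cw1 y hy).differentiableAt (by norm_num)
  have dw11 : ∀ y ∈ Ω, DifferentiableAt ℝ (pd1 w1) y := fun y hy => diff_pd1 (cw1 y hy)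
  have dw12 : ∀ y ∈ Ω, DifferentiableAt ℝ (pd2 w1) y := fun y hy => diff_pd2 (cw1 y hy)
  have dw2 : ∀ y ∈ Ω, DifferentiableAt ℝ w2 y := fun y hy => (cw2 y hy).differentiableAt (by norm_num)
  have dw21 : ∀ y ∈ Ω, DifferentiableAt ℝ (pd1 w2) y := fun y hy => diff_pd1 (cw2 y hy)
  have dw22 : ∀ y ∈ Ω, DifferentiableAt ℝ (pd2 w2) y := fun y hy => diff_pd2 (cw2 y hy)
  have df1 : ∀ y ∈ Ω, DifferentiableAt ℝ (pd1 f) y := fun y hy =>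
    (cf1 y hy).differentiableAt (by norm_num)
  have df2 : ∀ y ∈ Ω, DifferentiableAt ℝ (pd2 f) y := fun y hy =>
    (cf2 y hy).differentiableAt (by norm_num)
  have df11 : ∀ y ∈ Ω, DifferentiableAt ℝ (pd1 (pd1 f)) y := fun y hy => diff_pd1 (cf1 y hy)
  have df21 : ∀ y ∈ Ω, DifferentiableAt ℝ (pd2 (pd1 f)) y := fun y hy => diff_pd2 (cf1 y hy)
  have df12 : ∀ y ∈ Ω, DifferentiableAt ℝ (pd1 (pd2 f)) y := fun y hy => diff_pd1 (cf2 y hy)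
  have df22 : ∀ y ∈ Ω, DifferentiableAt ℝ (pd2 (pd2 f)) y := fun y hy => diff_pd2 (cf2 y hy)
  -- derivatives of u on Ω
  have eu11 : ∀ y ∈ Ω, pd1 (su1 w1 f) y = pd1 w1 y - pd1 (pd1 f) y := fun y hy => by
    exact pd1_sub (dw1 y hy) (df1 y hy)
  have eu12 : ∀ y ∈ Ω, pd2 (su1 w1 f) y = pd2 w1 y - pd2 (pd1 f) y := fun y hy => by
    exact pd2_sub (dw1 y hy) (df1 y hy)
  have eu21 : ∀ y ∈ Ω, pd1 (su2 w2 f) y = pd1 w2 y - pd1 (pd2 f) y := fun y hy => by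
    exact pd1_sub (dw2 y hy) (df2 y hy)
  have eu22 : ∀ y ∈ Ω, pd2 (su2 w2 f) y = pd2 w2 y - pd2 (pd2 f) y := fun y hy => by
    exact pd2_sub (dw2 y hy) (df2 y hy)
  -- swap on Ω for f (used inside outer derivatives)
  have swf : ∀ y ∈ Ω, pd2 (pd1 f) y = pd1 (pd2 f) y := fun y hy => pd_swap (cf' y hy)
  refine ⟨?_, ?_, ?_⟩
  · intro x hx
    rw [eu11 x hx, eu22 x hx]
    have := heq1 x hx
    linarith
  · intro x hx
    have hmem : Ω ∈ nhds x := hopen.mem_nhds hx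
    -- term a
    have E2a : pd1 (fun y => μ y * (pd1 (su1 w1 f) y + pd1 (su1 w1 f) y)) x
        = pd1 μ x * ((pd1 w1 x - pd1 (pd1 f) x) + (pd1 w1 x - pd1 (pd1 f) x))
          + μ x * ((pd1 (pd1 w1) x - pd1 (pd1 (pd1 f)) x)
            + (pd1 (pd1 w1) x - pd1 (pd1 (pd1 f)) x)) := by
      have he : (fun y => μ y * (pd1 (su1 w1 f) y + pd1 (su1 w1 f) y))
          =ᶠ[nhds x] (fun y => μ y * ((pd1 w1 y - pd1 (pd1 f) y) + (pd1 w1 y - pd1 (pd1 f) y))) :=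
        Filter.eventuallyEq_of_mem hmem (fun y hy => by rw [eu11 y hy])
      rw [pd1_congr he,
        pd1_mul (dμ x hx) (((dw11 x hx).fun_sub (df11 x hx)).fun_add ((dw11 x hx).fun_sub (df11 x hx))),
        pd1_add ((dw11 x hx).fun_sub (df11 x hx)) ((dw11 x hx).fun_sub (df11 x hx)),
        pd1_sub (dw11 x hx) (df11 x hx)]
    -- term b
    have E2b : pd2 (fun y => μ y * (pd2 (su1 w1 f) y + pd1 (su2 w2 f) y)) x
        = pd2 μ x * ((pd2 w1 x - pd1 (pd2 f) x) + (pd1 w2 x - pd1 (pd2 f) x))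
          + μ x * ((pd2 (pd2 w1) x - pd1 (pd2 (pd2 f)) x)
            + (pd1 (pd2 w2) x - pd1 (pd2 (pd2 f)) x)) := by
      have he : (fun y => μ y * (pd2 (su1 w1 f) y + pd1 (su2 w2 f) y))
          =ᶠ[nhds x] (fun y => μ y * ((pd2 w1 y - pd2 (pd1 f) y) + (pd1 w2 y - pd1 (pd2 f) y))) :=
        Filter.eventuallyEq_of_mem hmem (fun y hy => by rw [eu12 y hy, eu21 y hy])
      rw [pd2_congr he,
        pd2_mul (dμ x hx) (((dw12 x hx).fun_sub (df21 x hx)).fun_add ((dw21 x hx).fun_sub (df12 x hx))),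
        pd2_add ((dw12 x hx).fun_sub (df21 x hx)) ((dw21 x hx).fun_sub (df12 x hx)),
        pd2_sub (dw12 x hx) (df21 x hx), pd2_sub (dw21 x hx) (df12 x hx)]
      -- canonicalize mixed partials
      have s1 : pd2 (pd1 f) x = pd1 (pd2 f) x := swf x hx
      have s2 : pd2 (pd2 (pd1 f)) x = pd1 (pd2 (pd2 f)) x := by
        have he2 : pd2 (pd1 f) =ᶠ[nhds x] pd1 (pd2 f) :=
          Filter.eventuallyEq_of_mem hmem (fun y hy => swf y hy)
        rw [pd2_congr he2]; exact pd_swap (cf2 x hx)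
      have s3 : pd2 (pd1 (pd2 f)) x = pd1 (pd2 (pd2 f)) x := pd_swap (cf2 x hx)
      have s4 : pd2 (pd1 w2) x = pd1 (pd2 w2) x := pd_swap (cw2 x hx)
      rw [s1, s2, s3, s4]
    -- pressure term
    have E2c : pd1 (sp μ f) x
        = (pd1 μ x * (pd1 (pd1 f) x + pd2 (pd2 f) x)
            + μ x * (pd1 (pd1 (pd1 f)) x + pd1 (pd2 (pd2 f)) x)) / 2
          + (pd1 (pd1 μ) x * pd1 f x + pd1 μ x * pd1 (pd1 f) x)
          + (pd2 (pd1 μ) x * pd2 f x + pd2 μ x * pd1 (pd2 f) x) := by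
      have da : DifferentiableAt ℝ (fun y => μ y * (pd1 (pd1 f) y + pd2 (pd2 f) y) / 2) x :=
        by simp only [div_eq_mul_inv]; exact ((dμ x hx).mul ((df11 x hx).add (df22 x hx))).mul_const _
      have db : DifferentiableAt ℝ (fun y => pd1 μ y * pd1 f y) x :=
        (dμ1 x hx).mul (df1 x hx)
      have dc : DifferentiableAt ℝ (fun y => pd2 μ y * pd2 f y) x :=
        (dμ2 x hx).mul (df2 x hx)
      show pd1 (fun y => μ y * (pd1 (pd1 f) y + pd2 (pd2 f) y) / 2
          + pd1 μ y * pd1 f y + pd2 μ y * pd2 f y) x = _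
      rw [pd1_add (da.fun_add db) dc, pd1_add da db,
        pd1_div_const ((dμ x hx).fun_mul ((df11 x hx).fun_add (df22 x hx))) 2,
        pd1_mul (dμ x hx) ((df11 x hx).fun_add (df22 x hx)),
        pd1_add (df11 x hx) (df22 x hx),
        pd1_mul (dμ1 x hx) (df1 x hx),
        pd1_mul (dμ2 x hx) (df2 x hx)]
      have sμ : pd1 (pd2 μ) x = pd2 (pd1 μ) x := (pd_swap (cμ x hx)).symm
      rw [sμ]
    -- differentiated continuity equation
    have H11 : pd1 (pd1 (pd1 f)) x + pd1 (pd2 (pd2 f)) x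
        = pd1 (pd1 w1) x + pd1 (pd2 w2) x := by
      have he : (fun y => pd1 (pd1 f) y + pd2 (pd2 f) y)
          =ᶠ[nhds x] (fun y => pd1 w1 y + pd2 w2 y) :=
        Filter.eventuallyEq_of_mem hmem (fun y hy => heq1 y hy)
      have h := pd1_congr he
      rwa [pd1_add (df11 x hx) (df22 x hx), pd1_add (dw11 x hx) (dw22 x hx)] at h
    have H1 := heq1 x hx
    have H2 := heq2 x hx
    rw [E2a, E2b, E2c]
    linear_combination (1 / 2 : ℝ) * H2 + (pd1 μ x / 2) * H1 - (μ x / 2) * H11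
  · intro x hx
    have hmem : Ω ∈ nhds x := hopen.mem_nhds hx
    have E3a : pd1 (fun y => μ y * (pd1 (su2 w2 f) y + pd2 (su1 w1 f) y)) x
        = pd1 μ x * ((pd1 w2 x - pd1 (pd2 f) x) + (pd2 w1 x - pd1 (pd2 f) x))
          + μ x * ((pd1 (pd1 w2) x - pd2 (pd1 (pd1 f)) x)
            + (pd2 (pd1 w1) x - pd2 (pd1 (pd1 f)) x)) := by
      have he : (fun y => μ y * (pd1 (su2 w2 f) y + pd2 (su1 w1 f) y))
          =ᶠ[nhds x] (fun y => μ y * ((pd1 w2 y - pd1 (pd2 f) y) + (pd2 w1 y - pd2 (pd1 f) y))) :=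
        Filter.eventuallyEq_of_mem hmem (fun y hy => by rw [eu21 y hy, eu12 y hy])
      rw [pd1_congr he,
        pd1_mul (dμ x hx) (((dw21 x hx).fun_sub (df12 x hx)).fun_add ((dw12 x hx).fun_sub (df21 x hx))),
        pd1_add ((dw21 x hx).fun_sub (df12 x hx)) ((dw12 x hx).fun_sub (df21 x hx)),
        pd1_sub (dw21 x hx) (df12 x hx), pd1_sub (dw12 x hx) (df21 x hx)]
      have s1 : pd2 (pd1 f) x = pd1 (pd2 f) x := swf x hx
      -- pd1 (pd1 (pd2 f)) x = pd2 (pd1 (pd1 f)) x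
      have s2 : pd1 (pd1 (pd2 f)) x = pd2 (pd1 (pd1 f)) x := by
        have he2 : pd1 (pd2 f) =ᶠ[nhds x] pd2 (pd1 f) :=
          Filter.eventuallyEq_of_mem hmem (fun y hy => (swf y hy).symm)
        rw [pd1_congr he2]; exact (pd_swap (cf1 x hx)).symm
      have s3 : pd1 (pd2 (pd1 f)) x = pd2 (pd1 (pd1 f)) x := (pd_swap (cf1 x hx)).symm
      have s4 : pd1 (pd2 w1) x = pd2 (pd1 w1) x := (pd_swap (cw1 x hx)).symm
      rw [s1, s2, s3, s4]
    have E3b : pd2 (fun y => μ y * (pd2 (su2 w2 f) y + pd2 (su2 w2 f) y)) x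
        = pd2 μ x * ((pd2 w2 x - pd2 (pd2 f) x) + (pd2 w2 x - pd2 (pd2 f) x))
          + μ x * ((pd2 (pd2 w2) x - pd2 (pd2 (pd2 f)) x)
            + (pd2 (pd2 w2) x - pd2 (pd2 (pd2 f)) x)) := by
      have he : (fun y => μ y * (pd2 (su2 w2 f) y + pd2 (su2 w2 f) y))
          =ᶠ[nhds x] (fun y => μ y * ((pd2 w2 y - pd2 (pd2 f) y) + (pd2 w2 y - pd2 (pd2 f) y))) :=
        Filter.eventuallyEq_of_mem hmem (fun y hy => by rw [eu22 y hy])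
      rw [pd2_congr he,
        pd2_mul (dμ x hx) (((dw22 x hx).fun_sub (df22 x hx)).fun_add ((dw22 x hx).fun_sub (df22 x hx))),
        pd2_add ((dw22 x hx).fun_sub (df22 x hx)) ((dw22 x hx).fun_sub (df22 x hx)),
        pd2_sub (dw22 x hx) (df22 x hx)]
    have E3c : pd2 (sp μ f) x
        = (pd2 μ x * (pd1 (pd1 f) x + pd2 (pd2 f) x)
            + μ x * (pd2 (pd1 (pd1 f)) x + pd2 (pd2 (pd2 f)) x)) / 2
          + (pd1 (pd2 μ) x * pd1 f x + pd1 μ x * pd1 (pd2 f) x)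
          + (pd2 (pd2 μ) x * pd2 f x + pd2 μ x * pd2 (pd2 f) x) := by
      have da : DifferentiableAt ℝ (fun y => μ y * (pd1 (pd1 f) y + pd2 (pd2 f) y) / 2) x :=
        by simp only [div_eq_mul_inv]; exact ((dμ x hx).mul ((df11 x hx).add (df22 x hx))).mul_const _
      have db : DifferentiableAt ℝ (fun y => pd1 μ y * pd1 f y) x :=
        (dμ1 x hx).mul (df1 x hx)
      have dc : DifferentiableAt ℝ (fun y => pd2 μ y * pd2 f y) x :=
        (dμ2 x hx).mul (df2 x hx)
      show pd2 (fun y => μ y * (pd1 (pd1 f) y + pd2 (pd2 f) y) / 2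
          + pd1 μ y * pd1 f y + pd2 μ y * pd2 f y) x = _
      rw [pd2_add (da.fun_add db) dc, pd2_add da db,
        pd2_div_const ((dμ x hx).fun_mul ((df11 x hx).fun_add (df22 x hx))) 2,
        pd2_mul (dμ x hx) ((df11 x hx).fun_add (df22 x hx)),
        pd2_add (df11 x hx) (df22 x hx),
        pd2_mul (dμ1 x hx) (df1 x hx),
        pd2_mul (dμ2 x hx) (df2 x hx)]
      have sμ : pd2 (pd1 μ) x = pd1 (pd2 μ) x := pd_swap (cμ x hx)
      have s1 : pd2 (pd1 f) x = pd1 (pd2 f) x := swf x hx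
      rw [sμ, s1]
    have H12 : pd2 (pd1 (pd1 f)) x + pd2 (pd2 (pd2 f)) x
        = pd2 (pd1 w1) x + pd2 (pd2 w2) x := by
      have he : (fun y => pd1 (pd1 f) y + pd2 (pd2 f) y)
          =ᶠ[nhds x] (fun y => pd1 w1 y + pd2 w2 y) :=
        Filter.eventuallyEq_of_mem hmem (fun y hy => heq1 y hy)
      have h := pd2_congr he
      rwa [pd2_add (df11 x hx) (df22 x hx), pd2_add (dw11 x hx) (dw22 x hx)] at h
    have H1 := heq1 x hx
    have H3 := heq3 x hx
    rw [E3a, E3b, E3c]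
    linear_combination (1 / 2 : ℝ) * H3 + (pd2 μ x / 2) * H1 - (μ x / 2) * H12


end
end

section
/- Reduction of the Lamé system to a weakly coupled elliptic system: Let Ω ⊂ ℝ² be a domain and let λ, μ ∈ C²(Ω) with μ > 0 and λ + 2μ > 0 on Ω. Suppose w = (w₁,w₂) ∈ C²(Ω;ℝ²) and f ∈ C³(Ω;ℝ) satisfy in Ω: (i) (λ + 2μ) Δf + (λ + μ) div w + 2(∇μ, ∇f) = 0; (ii) μ Δw + M(w,f) = 0, where M(w,f) = −(∇μ) div w + ( (∇μ,∇w₁), (∇μ,∇w₂) ) + ( (∇μ, ∂_{x₁}w), (∇μ, ∂_{x₂}w) ) + 2 ((λ+μ)/(λ+2μ)) (∇μ) div w − 2( (∂_{x₁}∇μ, ∇f), (∂_{x₂}∇μ, ∇f) ) + 4 (∇μ) (∇μ,∇f)/(λ+2μ). Then u = w + ∇f solves the Lamé system 𝓛_{μ,λ}u = 0 in Ω, i.e. for k = 1,2: Σ_{j=1}² ∂_{x_j}( μ (∂_{x_j}u_k + ∂_{x_k}u_j) ) + ∂_{x_k}( λ div u ) = 0 in Ω. -/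
open Set

noncomputable section

def pdv (v : ℝ × ℝ) (g : ℝ × ℝ → ℝ) : ℝ × ℝ → ℝ := fun x => fderiv ℝ g x v

lemma pdv_add {g h : ℝ×ℝ→ℝ} {x : ℝ×ℝ} (v : ℝ×ℝ) (hg : DifferentiableAt ℝ g x)
    (hh : DifferentiableAt ℝ h x) :
    pdv v (fun y => g y + h y) x = pdv v g x + pdv v h x := by
  simp only [pdv]; rw [show (fun y => g y + h y) = g + h from rfl, fderiv_add hg hh]; simp

lemma pdv_mul {g h : ℝ×ℝ→ℝ} {x : ℝ×ℝ} (v : ℝ×ℝ) (hg : DifferentiableAt ℝ g x)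
    (hh : DifferentiableAt ℝ h x) :
    pdv v (fun y => g y * h y) x = pdv v g x * h x + g x * pdv v h x := by
  simp only [pdv]; rw [show (fun y => g y * h y) = g * h from rfl, fderiv_mul hg hh]; simp; ring

lemma pdv_cmul {g : ℝ×ℝ→ℝ} {x : ℝ×ℝ} (v : ℝ×ℝ) (c : ℝ) (hg : DifferentiableAt ℝ g x) :
    pdv v (fun y => c * g y) x = c * pdv v g x := by
  simp only [pdv]; rw [fderiv_const_mul hg]; simp

lemma pdv_zero {x : ℝ×ℝ} (v : ℝ×ℝ) : pdv v (fun _ => (0:ℝ)) x = 0 := by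
  simp only [pdv]; simp

lemma pdv_congr {g h : ℝ×ℝ→ℝ} {x : ℝ×ℝ} (v : ℝ×ℝ) (he : g =ᶠ[nhds x] h) :
    pdv v g x = pdv v h x := by
  simp only [pdv]; rw [he.fderiv_eq]

lemma pdv_contDiffAt {g : ℝ×ℝ→ℝ} {x : ℝ×ℝ} {m n : WithTop ℕ∞} (v : ℝ×ℝ)
    (h : ContDiffAt ℝ n g x) (hmn : m + 1 ≤ n) : ContDiffAt ℝ m (pdv v g) x :=
  (h.fderiv_right hmn).clm_apply contDiffAt_const

lemma pdv_symm {g : ℝ×ℝ→ℝ} {x : ℝ×ℝ} (h : ContDiffAt ℝ 2 g x) (v w : ℝ×ℝ) :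
    pdv v (pdv w g) x = pdv w (pdv v g) x := by
  have hd : DifferentiableAt ℝ (fderiv ℝ g) x :=
    (h.fderiv_right (m := 1) (by norm_num)).differentiableAt one_ne_zero
  have h1 : pdv v (pdv w g) x = fderiv ℝ (fderiv ℝ g) x v w := by
    show fderiv ℝ (fun y => fderiv ℝ g y w) x v = _
    rw [fderiv_clm_apply hd (differentiableAt_const _)]
    simp
  have h2 : pdv w (pdv v g) x = fderiv ℝ (fderiv ℝ g) x w v := by
    show fderiv ℝ (fun y => fderiv ℝ g y v) x w = _
    rw [fderiv_clm_apply hd (differentiableAt_const _)]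
    simp
  rw [h1, h2, h.isSymmSndFDerivAt (by simp)]

lemma lame_component
    (Ω : Set (ℝ × ℝ)) (hopen : IsOpen Ω) (a b : ℝ × ℝ)
    (lam μ wa wb f : ℝ × ℝ → ℝ)
    (hlam : ContDiffOn ℝ 2 lam Ω) (hμ : ContDiffOn ℝ 2 μ Ω)
    (hne : ∀ x ∈ Ω, lam x + 2 * μ x ≠ 0)
    (hwa : ContDiffOn ℝ 2 wa Ω) (hwb : ContDiffOn ℝ 2 wb Ω)
    (hf : ContDiffOn ℝ 3 f Ω)
    (heqf : ∀ x ∈ Ω,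
      (lam x + 2 * μ x) * (pdv a (pdv a f) x + pdv b (pdv b f) x)
        + (lam x + μ x) * (pdv a wa x + pdv b wb x)
        + 2 * (pdv a μ x * pdv a f x + pdv b μ x * pdv b f x) = 0)
    (heqw : ∀ x ∈ Ω,
      μ x * (pdv a (pdv a wa) x + pdv b (pdv b wa) x)
        + (-(pdv a μ x) * (pdv a wa x + pdv b wb x)
            + (pdv a μ x * pdv a wa x + pdv b μ x * pdv b wa x)
            + (pdv a μ x * pdv a wa x + pdv b μ x * pdv a wb x)
            + 2 * ((lam x + μ x) / (lam x + 2 * μ x)) * pdv a μ x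
                * (pdv a wa x + pdv b wb x)
            - 2 * (pdv a (pdv a μ) x * pdv a f x + pdv a (pdv b μ) x * pdv b f x)
            + 4 * pdv a μ x * (pdv a μ x * pdv a f x + pdv b μ x * pdv b f x)
                / (lam x + 2 * μ x)) = 0)
    (x : ℝ × ℝ) (hx : x ∈ Ω) :
    pdv a (fun y => μ y * (pdv a (fun z => wa z + pdv a f z) y
        + pdv a (fun z => wa z + pdv a f z) y)) x
      + pdv b (fun y => μ y * (pdv b (fun z => wa z + pdv a f z) y
        + pdv a (fun z => wb z + pdv b f z) y)) x
      + pdv a (fun y => lam y * (pdv a (fun z => wa z + pdv a f z) y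
        + pdv b (fun z => wb z + pdv b f z) y)) x = 0 := by
  have hmem : Ω ∈ nhds x := hopen.mem_nhds hx
  have cμ : ∀ y ∈ Ω, ContDiffAt ℝ 2 μ y := fun y hy => hμ.contDiffAt (hopen.mem_nhds hy)
  have clam : ∀ y ∈ Ω, ContDiffAt ℝ 2 lam y := fun y hy => hlam.contDiffAt (hopen.mem_nhds hy)
  have cwa : ∀ y ∈ Ω, ContDiffAt ℝ 2 wa y := fun y hy => hwa.contDiffAt (hopen.mem_nhds hy)
  have cwb : ∀ y ∈ Ω, ContDiffAt ℝ 2 wb y := fun y hy => hwb.contDiffAt (hopen.mem_nhds hy)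
  have cf : ∀ y ∈ Ω, ContDiffAt ℝ 3 f y := fun y hy => hf.contDiffAt (hopen.mem_nhds hy)
  have cpf : ∀ (v : ℝ×ℝ), ∀ y ∈ Ω, ContDiffAt ℝ 2 (pdv v f) y :=
    fun v y hy => pdv_contDiffAt v (cf y hy) (by norm_num)
  have dμ : ∀ y ∈ Ω, DifferentiableAt ℝ μ y :=
    fun y hy => (cμ y hy).differentiableAt (by norm_num)
  have dlam : ∀ y ∈ Ω, DifferentiableAt ℝ lam y :=
    fun y hy => (clam y hy).differentiableAt (by norm_num)
  have dwa : ∀ y ∈ Ω, DifferentiableAt ℝ wa y :=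
    fun y hy => (cwa y hy).differentiableAt (by norm_num)
  have dwb : ∀ y ∈ Ω, DifferentiableAt ℝ wb y :=
    fun y hy => (cwb y hy).differentiableAt (by norm_num)
  have dpμ : ∀ (v : ℝ×ℝ), ∀ y ∈ Ω, DifferentiableAt ℝ (pdv v μ) y :=
    fun v y hy => (pdv_contDiffAt (m := 1) v (cμ y hy) (by norm_num)).differentiableAt one_ne_zero
  have dpwa : ∀ (v : ℝ×ℝ), ∀ y ∈ Ω, DifferentiableAt ℝ (pdv v wa) y :=
    fun v y hy => (pdv_contDiffAt (m := 1) v (cwa y hy) (by norm_num)).differentiableAt one_ne_zero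
  have dpwb : ∀ (v : ℝ×ℝ), ∀ y ∈ Ω, DifferentiableAt ℝ (pdv v wb) y :=
    fun v y hy => (pdv_contDiffAt (m := 1) v (cwb y hy) (by norm_num)).differentiableAt one_ne_zero
  have dpf : ∀ (v : ℝ×ℝ), ∀ y ∈ Ω, DifferentiableAt ℝ (pdv v f) y :=
    fun v y hy => (cpf v y hy).differentiableAt (by norm_num)
  have dppf : ∀ (v w : ℝ×ℝ), ∀ y ∈ Ω, DifferentiableAt ℝ (pdv v (pdv w f)) y :=
    fun v w y hy => (pdv_contDiffAt (m := 1) v (cpf w y hy) (by norm_num)).differentiableAt one_ne_zero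
  have elu : ∀ (c v : ℝ×ℝ) (w : ℝ×ℝ→ℝ), (∀ y ∈ Ω, DifferentiableAt ℝ w y) →
      ∀ y ∈ Ω, pdv c (fun z => w z + pdv v f z) y = pdv c w y + pdv c (pdv v f) y :=
    fun c v w dw y hy => pdv_add c (dw y hy) (dpf v y hy)
  -- T1
  have hT1 : pdv a (fun y => μ y * (pdv a (fun z => wa z + pdv a f z) y
        + pdv a (fun z => wa z + pdv a f z) y)) x
      = pdv a μ x * ((pdv a wa x + pdv a (pdv a f) x) + (pdv a wa x + pdv a (pdv a f) x))
        + μ x * ((pdv a (pdv a wa) x + pdv a (pdv a (pdv a f)) x)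
            + (pdv a (pdv a wa) x + pdv a (pdv a (pdv a f)) x)) := by
    have e1 : (fun y => μ y * (pdv a (fun z => wa z + pdv a f z) y
          + pdv a (fun z => wa z + pdv a f z) y))
        =ᶠ[nhds x] (fun y => μ y * ((pdv a wa y + pdv a (pdv a f) y)
          + (pdv a wa y + pdv a (pdv a f) y))) :=
      Filter.eventuallyEq_of_mem hmem (fun y hy => by rw [elu a a wa dwa y hy])
    rw [pdv_congr a e1,
      pdv_mul a (dμ x hx) (((dpwa a x hx).fun_add (dppf a a x hx)).fun_add
        ((dpwa a x hx).fun_add (dppf a a x hx))),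
      pdv_add a ((dpwa a x hx).fun_add (dppf a a x hx)) ((dpwa a x hx).fun_add (dppf a a x hx)),
      pdv_add a (dpwa a x hx) (dppf a a x hx)]
  -- T2
  have hT2 : pdv b (fun y => μ y * (pdv b (fun z => wa z + pdv a f z) y
        + pdv a (fun z => wb z + pdv b f z) y)) x
      = pdv b μ x * ((pdv b wa x + pdv b (pdv a f) x) + (pdv a wb x + pdv a (pdv b f) x))
        + μ x * ((pdv b (pdv b wa) x + pdv b (pdv b (pdv a f)) x)
            + (pdv b (pdv a wb) x + pdv b (pdv a (pdv b f)) x)) := by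
    have e2 : (fun y => μ y * (pdv b (fun z => wa z + pdv a f z) y
          + pdv a (fun z => wb z + pdv b f z) y))
        =ᶠ[nhds x] (fun y => μ y * ((pdv b wa y + pdv b (pdv a f) y)
          + (pdv a wb y + pdv a (pdv b f) y))) :=
      Filter.eventuallyEq_of_mem hmem
        (fun y hy => by rw [elu b a wa dwa y hy, elu a b wb dwb y hy])
    rw [pdv_congr b e2,
      pdv_mul b (dμ x hx) (((dpwa b x hx).fun_add (dppf b a x hx)).fun_add
        ((dpwb a x hx).fun_add (dppf a b x hx))),
      pdv_add b ((dpwa b x hx).fun_add (dppf b a x hx)) ((dpwb a x hx).fun_add (dppf a b x hx)),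
      pdv_add b (dpwa b x hx) (dppf b a x hx),
      pdv_add b (dpwb a x hx) (dppf a b x hx)]
  -- T3
  have hT3 : pdv a (fun y => lam y * (pdv a (fun z => wa z + pdv a f z) y
        + pdv b (fun z => wb z + pdv b f z) y)) x
      = pdv a lam x * ((pdv a wa x + pdv a (pdv a f) x) + (pdv b wb x + pdv b (pdv b f) x))
        + lam x * ((pdv a (pdv a wa) x + pdv a (pdv a (pdv a f)) x)
            + (pdv a (pdv b wb) x + pdv a (pdv b (pdv b f)) x)) := by
    have e3 : (fun y => lam y * (pdv a (fun z => wa z + pdv a f z) y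
          + pdv b (fun z => wb z + pdv b f z) y))
        =ᶠ[nhds x] (fun y => lam y * ((pdv a wa y + pdv a (pdv a f) y)
          + (pdv b wb y + pdv b (pdv b f) y))) :=
      Filter.eventuallyEq_of_mem hmem
        (fun y hy => by rw [elu a a wa dwa y hy, elu b b wb dwb y hy])
    rw [pdv_congr a e3,
      pdv_mul a (dlam x hx) (((dpwa a x hx).fun_add (dppf a a x hx)).fun_add
        ((dpwb b x hx).fun_add (dppf b b x hx))),
      pdv_add a ((dpwa a x hx).fun_add (dppf a a x hx)) ((dpwb b x hx).fun_add (dppf b b x hx)),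
      pdv_add a (dpwa a x hx) (dppf a a x hx),
      pdv_add a (dpwb b x hx) (dppf b b x hx)]
  -- symmetry facts
  have sf : ∀ y ∈ Ω, pdv b (pdv a f) y = pdv a (pdv b f) y :=
    fun y hy => pdv_symm ((cf y hy).of_le (by norm_num)) b a
  have sfx := sf x hx
  have swb : pdv b (pdv a wb) x = pdv a (pdv b wb) x := pdv_symm (cwb x hx) b a
  have s3a : pdv b (pdv b (pdv a f)) x = pdv a (pdv b (pdv b f)) x := by
    have h1 : pdv b (pdv a f) =ᶠ[nhds x] pdv a (pdv b f) :=
      Filter.eventuallyEq_of_mem hmem sf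
    rw [pdv_congr b h1, pdv_symm (cpf b x hx) b a]
  have s3b : pdv b (pdv a (pdv b f)) x = pdv a (pdv b (pdv b f)) x :=
    pdv_symm (cpf b x hx) b a
  -- derivative of the f-equation
  have hA1 : pdv a (fun y => (lam y + 2 * μ y) * (pdv a (pdv a f) y + pdv b (pdv b f) y)
      + ((lam y + μ y) * (pdv a wa y + pdv b wb y)
        + 2 * (pdv a μ y * pdv a f y + pdv b μ y * pdv b f y))) x = 0 := by
    have hz : (fun y => (lam y + 2 * μ y) * (pdv a (pdv a f) y + pdv b (pdv b f) y)
        + ((lam y + μ y) * (pdv a wa y + pdv b wb y)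
          + 2 * (pdv a μ y * pdv a f y + pdv b μ y * pdv b f y)))
        =ᶠ[nhds x] (fun _ => (0:ℝ)) :=
      Filter.eventuallyEq_of_mem hmem (fun y hy => by have h := heqf y hy; linarith)
    rw [pdv_congr a hz, pdv_zero]
  have hA1' : pdv a (fun y => (lam y + 2 * μ y) * (pdv a (pdv a f) y + pdv b (pdv b f) y)
      + ((lam y + μ y) * (pdv a wa y + pdv b wb y)
        + 2 * (pdv a μ y * pdv a f y + pdv b μ y * pdv b f y))) x
      = (pdv a lam x + 2 * pdv a μ x) * (pdv a (pdv a f) x + pdv b (pdv b f) x)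
        + (lam x + 2 * μ x) * (pdv a (pdv a (pdv a f)) x + pdv a (pdv b (pdv b f)) x)
        + ((pdv a lam x + pdv a μ x) * (pdv a wa x + pdv b wb x)
          + (lam x + μ x) * (pdv a (pdv a wa) x + pdv a (pdv b wb) x)
          + 2 * ((pdv a (pdv a μ) x * pdv a f x + pdv a μ x * pdv a (pdv a f) x)
            + (pdv a (pdv b μ) x * pdv b f x + pdv b μ x * pdv a (pdv b f) x))) := by
    have dP : DifferentiableAt ℝ (fun y => lam y + 2 * μ y) x :=
      (dlam x hx).fun_add ((dμ x hx).const_mul 2)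
    have dQ : DifferentiableAt ℝ (fun y => pdv a (pdv a f) y + pdv b (pdv b f) y) x :=
      (dppf a a x hx).fun_add (dppf b b x hx)
    have dR : DifferentiableAt ℝ (fun y => lam y + μ y) x := (dlam x hx).fun_add (dμ x hx)
    have dS : DifferentiableAt ℝ (fun y => pdv a wa y + pdv b wb y) x :=
      (dpwa a x hx).fun_add (dpwb b x hx)
    have dT : DifferentiableAt ℝ (fun y => pdv a μ y * pdv a f y + pdv b μ y * pdv b f y) x :=
      ((dpμ a x hx).fun_mul (dpf a x hx)).fun_add ((dpμ b x hx).fun_mul (dpf b x hx))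
    rw [pdv_add a (dP.fun_mul dQ) ((dR.fun_mul dS).fun_add (dT.const_mul 2)),
      pdv_mul a dP dQ,
      pdv_add a (dR.fun_mul dS) (dT.const_mul 2),
      pdv_mul a dR dS,
      pdv_cmul a 2 dT,
      pdv_add a (dlam x hx) ((dμ x hx).const_mul 2),
      pdv_cmul a 2 (dμ x hx),
      pdv_add a (dppf a a x hx) (dppf b b x hx),
      pdv_add a (dlam x hx) (dμ x hx),
      pdv_add a (dpwa a x hx) (dpwb b x hx),
      pdv_add a ((dpμ a x hx).fun_mul (dpf a x hx)) ((dpμ b x hx).fun_mul (dpf b x hx)),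
      pdv_mul a (dpμ a x hx) (dpf a x hx),
      pdv_mul a (dpμ b x hx) (dpf b x hx)]
  have hA1'' := hA1'.symm.trans hA1
  have hA := heqf x hx
  have hne' := hne x hx
  have hkey := heqw x hx
  have hkey' : (lam x + 2 * μ x) * (μ x * (pdv a (pdv a wa) x + pdv b (pdv b wa) x))
      + ((lam x + 2 * μ x) * (-(pdv a μ x) * (pdv a wa x + pdv b wb x)
          + (pdv a μ x * pdv a wa x + pdv b μ x * pdv b wa x)
          + (pdv a μ x * pdv a wa x + pdv b μ x * pdv a wb x)
          - 2 * (pdv a (pdv a μ) x * pdv a f x + pdv a (pdv b μ) x * pdv b f x))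
        + 2 * (lam x + μ x) * pdv a μ x * (pdv a wa x + pdv b wb x)
        + 4 * pdv a μ x * (pdv a μ x * pdv a f x + pdv b μ x * pdv b f x)) = 0 := by
    have e1 : (lam x + 2 * μ x) * ((lam x + μ x) / (lam x + 2 * μ x)) = lam x + μ x := by
      field_simp
    have e2 : (lam x + 2 * μ x) * (4 * pdv a μ x * (pdv a μ x * pdv a f x + pdv b μ x * pdv b f x)
        / (lam x + 2 * μ x)) = 4 * pdv a μ x * (pdv a μ x * pdv a f x + pdv b μ x * pdv b f x) := by
      field_simp
    linear_combination (lam x + 2 * μ x) * hkey - 2 * pdv a μ x * (pdv a wa x + pdv b wb x) * e1 - e2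
  rw [hT1, hT2, hT3, sfx, swb, s3a, s3b]
  refine mul_left_cancel₀ hne' ?_
  rw [mul_zero]
  linear_combination hkey' + (lam x + 2 * μ x) * hA1'' - 2 * pdv a μ x * hA


/-- The displacement component `u₁ = w₁ + ∂₁ f`. -/
def lu1 (w1 f : ℝ × ℝ → ℝ) : ℝ × ℝ → ℝ := fun x => w1 x + pd1 f x

/-- The displacement component `u₂ = w₂ + ∂₂ f`. -/
def lu2 (w2 f : ℝ × ℝ → ℝ) : ℝ × ℝ → ℝ := fun x => w2 x + pd2 f x

/-- **Reduction of the Lamé system to a weakly coupled elliptic system**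
(Proposition 7.1): if `(w, f)` satisfies
`(λ+2μ)Δf + (λ+μ)div w + 2(∇μ,∇f) = 0` and `μΔw + M(w,f) = 0`,
then `u = w + ∇f` solves the Lamé system `𝓛_{μ,λ}u = 0` in `Ω`. -/
theorem lame_reduction
    (Ω : Set (ℝ × ℝ)) (hopen : IsOpen Ω) (hconn : IsConnected Ω)
    (lam μ w1 w2 f : ℝ × ℝ → ℝ)
    (hlam : ContDiffOn ℝ 2 lam Ω) (hμ : ContDiffOn ℝ 2 μ Ω)
    (hμpos : ∀ x ∈ Ω, 0 < μ x) (hlampos : ∀ x ∈ Ω, 0 < lam x + 2 * μ x)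
    (hw1 : ContDiffOn ℝ 2 w1 Ω) (hw2 : ContDiffOn ℝ 2 w2 Ω)
    (hf : ContDiffOn ℝ 3 f Ω)
    (heqf : ∀ x ∈ Ω,
      (lam x + 2 * μ x) * (pd1 (pd1 f) x + pd2 (pd2 f) x)
        + (lam x + μ x) * (pd1 w1 x + pd2 w2 x)
        + 2 * (pd1 μ x * pd1 f x + pd2 μ x * pd2 f x) = 0)
    (heqw1 : ∀ x ∈ Ω,
      μ x * (pd1 (pd1 w1) x + pd2 (pd2 w1) x)
        + (-(pd1 μ x) * (pd1 w1 x + pd2 w2 x)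
            + (pd1 μ x * pd1 w1 x + pd2 μ x * pd2 w1 x)
            + (pd1 μ x * pd1 w1 x + pd2 μ x * pd1 w2 x)
            + 2 * ((lam x + μ x) / (lam x + 2 * μ x)) * pd1 μ x
                * (pd1 w1 x + pd2 w2 x)
            - 2 * (pd1 (pd1 μ) x * pd1 f x + pd1 (pd2 μ) x * pd2 f x)
            + 4 * pd1 μ x * (pd1 μ x * pd1 f x + pd2 μ x * pd2 f x)
                / (lam x + 2 * μ x)) = 0)
    (heqw2 : ∀ x ∈ Ω,
      μ x * (pd1 (pd1 w2) x + pd2 (pd2 w2) x)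
        + (-(pd2 μ x) * (pd1 w1 x + pd2 w2 x)
            + (pd1 μ x * pd1 w2 x + pd2 μ x * pd2 w2 x)
            + (pd1 μ x * pd2 w1 x + pd2 μ x * pd2 w2 x)
            + 2 * ((lam x + μ x) / (lam x + 2 * μ x)) * pd2 μ x
                * (pd1 w1 x + pd2 w2 x)
            - 2 * (pd2 (pd1 μ) x * pd1 f x + pd2 (pd2 μ) x * pd2 f x)
            + 4 * pd2 μ x * (pd1 μ x * pd1 f x + pd2 μ x * pd2 f x)
                / (lam x + 2 * μ x)) = 0) :
    (∀ x ∈ Ω,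
      pd1 (fun y => μ y * (pd1 (lu1 w1 f) y + pd1 (lu1 w1 f) y)) x
        + pd2 (fun y => μ y * (pd2 (lu1 w1 f) y + pd1 (lu2 w2 f) y)) x
        + pd1 (fun y => lam y * (pd1 (lu1 w1 f) y + pd2 (lu2 w2 f) y)) x = 0) ∧
    (∀ x ∈ Ω,
      pd1 (fun y => μ y * (pd1 (lu2 w2 f) y + pd2 (lu1 w1 f) y)) x
        + pd2 (fun y => μ y * (pd2 (lu2 w2 f) y + pd2 (lu2 w2 f) y)) x
        + pd2 (fun y => lam y * (pd1 (lu1 w1 f) y + pd2 (lu2 w2 f) y)) x = 0) := by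
  have hne : ∀ x ∈ Ω, lam x + 2 * μ x ≠ 0 := fun x hx => ne_of_gt (hlampos x hx)
  constructor
  · intro x hx
    exact lame_component Ω hopen (1, 0) (0, 1) lam μ w1 w2 f hlam hμ hne hw1 hw2 hf
      heqf heqw1 x hx
  · intro x hx
    have e : (fun y => lam y * (pd1 (lu1 w1 f) y + pd2 (lu2 w2 f) y))
        = (fun y => lam y * (pd2 (lu2 w2 f) y + pd1 (lu1 w1 f) y)) := by
      funext y; ring
    rw [e]
    have heqf' : ∀ x ∈ Ω,
        (lam x + 2 * μ x) * (pdv (0,1) (pdv (0,1) f) x + pdv (1,0) (pdv (1,0) f) x)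
          + (lam x + μ x) * (pdv (0,1) w2 x + pdv (1,0) w1 x)
          + 2 * (pdv (0,1) μ x * pdv (0,1) f x + pdv (1,0) μ x * pdv (1,0) f x) = 0 := by
      intro x hx
      show (lam x + 2 * μ x) * (pd2 (pd2 f) x + pd1 (pd1 f) x)
          + (lam x + μ x) * (pd2 w2 x + pd1 w1 x)
          + 2 * (pd2 μ x * pd2 f x + pd1 μ x * pd1 f x) = 0
      linarith [heqf x hx]
    have heqw' : ∀ x ∈ Ω,
        μ x * (pdv (0,1) (pdv (0,1) w2) x + pdv (1,0) (pdv (1,0) w2) x)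
          + (-(pdv (0,1) μ x) * (pdv (0,1) w2 x + pdv (1,0) w1 x)
              + (pdv (0,1) μ x * pdv (0,1) w2 x + pdv (1,0) μ x * pdv (1,0) w2 x)
              + (pdv (0,1) μ x * pdv (0,1) w2 x + pdv (1,0) μ x * pdv (0,1) w1 x)
              + 2 * ((lam x + μ x) / (lam x + 2 * μ x)) * pdv (0,1) μ x
                  * (pdv (0,1) w2 x + pdv (1,0) w1 x)
              - 2 * (pdv (0,1) (pdv (0,1) μ) x * pdv (0,1) f x
                  + pdv (0,1) (pdv (1,0) μ) x * pdv (1,0) f x)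
              + 4 * pdv (0,1) μ x * (pdv (0,1) μ x * pdv (0,1) f x
                  + pdv (1,0) μ x * pdv (1,0) f x) / (lam x + 2 * μ x)) = 0 := by
      intro x hx
      show μ x * (pd2 (pd2 w2) x + pd1 (pd1 w2) x)
          + (-(pd2 μ x) * (pd2 w2 x + pd1 w1 x)
              + (pd2 μ x * pd2 w2 x + pd1 μ x * pd1 w2 x)
              + (pd2 μ x * pd2 w2 x + pd1 μ x * pd2 w1 x)
              + 2 * ((lam x + μ x) / (lam x + 2 * μ x)) * pd2 μ x
                  * (pd2 w2 x + pd1 w1 x)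
              - 2 * (pd2 (pd2 μ) x * pd2 f x + pd2 (pd1 μ) x * pd1 f x)
              + 4 * pd2 μ x * (pd2 μ x * pd2 f x + pd1 μ x * pd1 f x)
                  / (lam x + 2 * μ x)) = 0
      linear_combination heqw2 x hx
    have H := lame_component Ω hopen (0, 1) (1, 0) lam μ w2 w1 f hlam hμ hne hw2 hw1 hf
      heqf' heqw' x hx
    have H' : pd2 (fun y => μ y * (pd2 (lu2 w2 f) y + pd2 (lu2 w2 f) y)) x
        + pd1 (fun y => μ y * (pd1 (lu2 w2 f) y + pd2 (lu1 w1 f) y)) x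
        + pd2 (fun y => lam y * (pd2 (lu2 w2 f) y + pd1 (lu1 w1 f) y)) x = 0 := H
    linarith [H']

end
end
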